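/- For each i ≥ 1 and each z ∈ X, there exists a basis B of the subspace (ker ∂_i)_z such that for every b ∈ B there is some z' ≤ z with (b, z') ∈ C^{i+1}. -/
import Mathlib


open Finsupp

variable (k : Type) [Field k] (X : Type) [PartialOrder X] [Fintype X] [DecidableEq X]

/-- Ambient type in which the `i`-cycles live: `Amb 0 = X`,
`Amb (i+1) = (Amb i →₀ k) × X`. -/
def Amb : ℕ → Type
  | 0 => X
  | i + 1 => ((Amb i) →₀ k) × X

/-- The "vertex" (second coordinate) of an element of `Amb i`. -/
def vtx : ∀ i : ℕ, Amb k X i → X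
  | 0, a => a
  | _ + 1, p => p.2

/-- The ambient boundary map `∂_{i+1} : k C^{i+1} → k C^i`, defined on the whole
free module `Amb (i+1) →₀ k` by `(w, z) ↦ w`. -/
noncomputable def bd (i : ℕ) : (Amb k X (i + 1) →₀ k) →ₗ[k] (Amb k X i →₀ k) :=
  Finsupp.linearCombination k (fun p : Amb k X (i + 1) => p.1)

/-- `(ker ∂_{i+1})_z`: the subspace of elements of `ker ∂_{i+1}`, supported on `C^{i+1}`,
all of whose support elements have second coordinate `< z`. -/
noncomputable def Kz (C : ∀ i : ℕ, Set (Amb k X i)) (i : ℕ) (z : X) :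
    Submodule k (Amb k X (i + 1) →₀ k) :=
  LinearMap.ker (bd k X i) ⊓ Finsupp.supported k k (C (i + 1)) ⊓
    Finsupp.supported k k {p : Amb k X (i + 1) | vtx k X (i + 1) p < z}

/-- `(ker ∂_{i+1})_{z^-} = Σ_{z' ⋖ z} (ker ∂_{i+1})_{z'}`. -/
noncomputable def Kpred (C : ∀ i : ℕ, Set (Amb k X i)) (i : ℕ) (z : X) :
    Submodule k (Amb k X (i + 1) →₀ k) :=
  ⨆ z' ∈ {z' : X | z' ⋖ z}, Kz k X C i z'

/-- `B^{i+2}_z'`: the set of `w` with `(w, z) ∈ C^{i+2}`. -/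
def Bset (C : ∀ i : ℕ, Set (Amb k X i)) (i : ℕ) (z : X) : Set (Amb k X (i + 1) →₀ k) :=
  {w | (⟨w, z⟩ : Amb k X (i + 2)) ∈ C (i + 2)}

/-- The data of an admissible choice of `i`-cycles `C^i` for the poset `X` at the point `x`:
`C^0 = {x}`, `C^1 = {(x,y) : y ∈ x⁺}` and, recursively, for each `z` the set
`B^{i+2}_z' = {w | (w,z) ∈ C^{i+2}}` is a basis of a complement of `(ker ∂_{i+1})_{z⁻}`
inside `(ker ∂_{i+1})_z`. -/
structure CycleData (x : X) : Type 1 where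
  C : ∀ i : ℕ, Set (Amb k X i)
  hC0 : C 0 = {x}
  hC1 : C 1 = {p : Amb k X 1 | ∃ y : X, x ⋖ y ∧ p = ⟨Finsupp.single x 1, y⟩}
  indep : ∀ (i : ℕ) (z : X),
    LinearIndependent k (Subtype.val : Bset k X C i z → (Amb k X (i + 1) →₀ k))
  disj : ∀ (i : ℕ) (z : X),
    Submodule.span k (Bset k X C i z) ⊓ Kpred k X C i z = ⊥
  compl : ∀ (i : ℕ) (z : X),
    Submodule.span k (Bset k X C i z) ⊔ Kpred k X C i z = Kz k X C i z


/-- For each `i ≥ 1` (here `i+1`, `i ≥ 0`) and each `z ∈ X`, there exists a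
basis `B` of the subspace `(ker ∂_{i+1})_z` such that for every `b ∈ B` there is some `z' ≤ z`
with `(b, z') ∈ C^{i+2}`. -/
lemma Kz_mono (C : ∀ i : ℕ, Set (Amb k X i)) (i : ℕ) {z z' : X} (h : z' ≤ z) :
    Kz k X C i z' ≤ Kz k X C i z := by
  unfold Kz
  refine inf_le_inf le_rfl (Finsupp.supported_mono ?_)
  intro p hp
  exact lt_of_lt_of_le hp h

lemma span_Bset_le (x : X) (D : CycleData k X x) (i : ℕ) (z : X) :
    Submodule.span k (Bset k X D.C i z) ≤ Kz k X D.C i z :=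
  le_of_le_of_eq le_sup_left (D.compl i z)

lemma span_union_eq (x : X) (D : CycleData k X x) (i : ℕ) (z : X) :
    Submodule.span k (⋃ z' ∈ {z' : X | z' ≤ z}, Bset k X D.C i z') = Kz k X D.C i z := by
  induction z using WellFoundedLT.induction with
  | ind z IH =>
    apply le_antisymm
    · rw [Submodule.span_le]
      rintro b hb
      simp only [Set.mem_iUnion, Set.mem_setOf_eq] at hb
      obtain ⟨z', hz', hb⟩ := hb
      exact Kz_mono k X D.C i hz' (span_Bset_le k X x D i z' (Submodule.subset_span hb))
    · rw [← D.compl i z]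
      apply sup_le
      · exact Submodule.span_mono (Set.subset_biUnion_of_mem (le_refl z))
      · apply iSup₂_le
        intro z' hz'
        rw [← IH z' hz'.lt]
        apply Submodule.span_mono
        apply Set.iUnion₂_mono'
        intro z'' hz''
        exact ⟨z'', le_trans hz'' hz'.le, subset_rfl⟩

theorem stmt1 (x : X) (D : CycleData k X x) (i : ℕ) (z : X) :
    ∃ B : Set (Amb k X (i + 1) →₀ k),
      LinearIndependent k (Subtype.val : B → (Amb k X (i + 1) →₀ k)) ∧
      Submodule.span k B = Kz k X D.C i z ∧
      ∀ b ∈ B, ∃ z' : X, z' ≤ z ∧ (⟨b, z'⟩ : Amb k X (i + 2)) ∈ D.C (i + 2) := by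
  obtain ⟨B, hBsub, hspan, hind⟩ :=
    exists_linearIndependent k (⋃ z' ∈ {z' : X | z' ≤ z}, Bset k X D.C i z')
  refine ⟨B, hind, hspan.trans (span_union_eq k X x D i z), ?_⟩
  intro b hb
  have := hBsub hb
  simp only [Set.mem_iUnion, Set.mem_setOf_eq] at this
  obtain ⟨z', hz', hb'⟩ := this
  exact ⟨z', hz', hb'⟩
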